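/- Under the isomorphism Cl(V ⊕ ℝ^{1,1}) ≅ Mat₂(Cl(V)), the Clifford conjugation is given by [[a,b],[c,d]] ↦ [[d~, -b~],[-c~, a~]], where x~ denotes the reversal on Cl(V). -/
import Mathlib

open CliffordAlgebra

noncomputable def negQhat {V : Type*} [AddCommGroup V] [Module ℝ V]
    (Q : QuadraticForm ℝ V) : QuadraticForm ℝ (V × ℝ × ℝ) :=
  QuadraticMap.prod (-Q) (QuadraticMap.prod QuadraticMap.sq (-QuadraticMap.sq))

/-- The Clifford map `j : V ⊕ ℝ^{1,1} → Mat₂(Cl(V))`,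
`j(v + x₋e₋ + x₊e₊) = [[v, x₋-x₊],[x₋+x₊, -v]]` (convention `v² = -Q v`). -/
noncomputable def jmat {V : Type*} [AddCommGroup V] [Module ℝ V]
    (Q : QuadraticForm ℝ V) (x : V × ℝ × ℝ) :
    Matrix (Fin 2) (Fin 2) (CliffordAlgebra (-Q)) :=
  !![ι (-Q) x.1, algebraMap ℝ _ (x.2.1 - x.2.2);
     algebraMap ℝ _ (x.2.1 + x.2.2), -ι (-Q) x.1]

noncomputable def Tfun {V : Type*} [AddCommGroup V] [Module ℝ V]
    (Q : QuadraticForm ℝ V)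
    (M : Matrix (Fin 2) (Fin 2) (CliffordAlgebra (-Q))) :
    Matrix (Fin 2) (Fin 2) (CliffordAlgebra (-Q)) :=
  !![reverse (M 1 1), -reverse (M 0 1); -reverse (M 1 0), reverse (M 0 0)]

lemma Tfun_apply {V : Type*} [AddCommGroup V] [Module ℝ V]
    (Q : QuadraticForm ℝ V) (a b c d : CliffordAlgebra (-Q)) :
    Tfun Q !![a, b; c, d] = !![reverse d, -reverse b; -reverse c, reverse a] := by
  simp [Tfun]

lemma Tfun_antimul_aux {V : Type*} [AddCommGroup V] [Module ℝ V]
    (Q : QuadraticForm ℝ V) (a b c d e f g h : CliffordAlgebra (-Q)) :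
    Tfun Q (!![a, b; c, d] * !![e, f; g, h]) =
      Tfun Q !![e, f; g, h] * Tfun Q !![a, b; c, d] := by
  rw [Matrix.mul_fin_two, Tfun_apply, Tfun_apply, Tfun_apply, Matrix.mul_fin_two]
  simp only [map_add, reverse.map_mul, neg_mul, mul_neg, neg_neg, neg_add_rev]
  rw [add_comm (reverse f * reverse c) (reverse h * reverse d),
    add_comm (reverse e * reverse a) (reverse g * reverse b)]

lemma Tfun_antimul {V : Type*} [AddCommGroup V] [Module ℝ V]
    (Q : QuadraticForm ℝ V) (M N : Matrix (Fin 2) (Fin 2) (CliffordAlgebra (-Q))) :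
    Tfun Q (M * N) = Tfun Q N * Tfun Q M := by
  rw [Matrix.eta_fin_two M, Matrix.eta_fin_two N, Tfun_antimul_aux]

lemma key {V : Type*} [AddCommGroup V] [Module ℝ V]
    (Q : QuadraticForm ℝ V)
    (F : CliffordAlgebra (negQhat Q) ≃ₐ[ℝ] Matrix (Fin 2) (Fin 2) (CliffordAlgebra (-Q)))
    (hF : ∀ x : V × ℝ × ℝ, F (ι (negQhat Q) x) = jmat Q x)
    (y : CliffordAlgebra (negQhat Q)) :
    F (reverse (involute y)) = Tfun Q (F y) := by
  induction y using CliffordAlgebra.induction with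
  | algebraMap r =>
      rw [involute.commutes, reverse.commutes, AlgEquiv.commutes]
      ext i j
      fin_cases i <;> fin_cases j <;>
        simp [Tfun, Matrix.algebraMap_eq_diagonal, Matrix.diagonal, reverse.commutes]
  | ι x =>
      simp only [involute_ι, map_neg, reverse_ι, hF]
      ext i j
      fin_cases i <;> fin_cases j <;>
        simp [Tfun, jmat, reverse_ι, reverse.commutes]
  | mul a b ha hb =>
      rw [map_mul, reverse.map_mul, map_mul, ha, hb, ← Tfun_antimul, ← map_mul]
  | add a b ha hb =>
      rw [map_add, map_add, map_add, ha, hb]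
      ext i j
      fin_cases i <;> fin_cases j <;> (simp [Tfun]; try abel)

theorem clifford_conjugation_matrix (V : Type*) [AddCommGroup V] [Module ℝ V]
    (Q : QuadraticForm ℝ V)
    (F : CliffordAlgebra (negQhat Q) ≃ₐ[ℝ] Matrix (Fin 2) (Fin 2) (CliffordAlgebra (-Q)))
    (hF : ∀ x : V × ℝ × ℝ, F (ι (negQhat Q) x) = jmat Q x)
    (a b c d : CliffordAlgebra (-Q)) :
    F (reverse (involute (F.symm !![a, b; c, d]))) =
      !![reverse d, -reverse b; -reverse c, reverse a] := by
  rw [key Q F hF, F.apply_symm_apply]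
  ext i j
  fin_cases i <;> fin_cases j <;> simp [Tfun]
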